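/- Let E be an infinite-dimensional Banach space and let 𝒜 = 𝒜(E) be the algebra of approximable operators on E. Then AP(𝒜') = {0}: the only functional U ∈ 𝒜(E)' for which the map 𝒜(E) → 𝒜(E)', T ↦ T·U is compact, is U = 0. -/

import Mathlib

set_option maxSynthPendingDepth 3
set_option maxHeartbeats 1000000
set_option synthInstance.maxHeartbeats 1000000

noncomputable section

open Filter Metric Topology ContinuousLinearMap
open scoped ENNReal

universe u v w y

namespace UPaper

/-- The (topological) dual of a complex normed space. -/
abbrev Dl (E : Type u) [NormedAddCommGroup E] [NormedSpace ℂ E] : Type u := E →L[ℂ] ℂ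

section Arens

variable {E : Type u} [NormedAddCommGroup E] [NormedSpace ℂ E]

/-- The right action of an algebra `(E, m)` on its dual:
`rAct m a μ = μ · a`, i.e. `⟨μ·a, b⟩ = ⟨μ, ab⟩`. -/
def rAct (m : E →L[ℂ] E →L[ℂ] E) : E →L[ℂ] Dl E →L[ℂ] Dl E :=
  (compL ℂ E E ℂ).flip.comp m

/-- The left action of an algebra `(E, m)` on its dual:
`lAct m a μ = a · μ`, i.e. `⟨a·μ, b⟩ = ⟨μ, ba⟩`. -/
def lAct (m : E →L[ℂ] E →L[ℂ] E) : E →L[ℂ] Dl E →L[ℂ] Dl E :=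
  (compL ℂ E E ℂ).flip.comp m.flip

/-- `arAct m Ψ μ = Ψ · μ`, i.e. `⟨Ψ·μ, a⟩ = ⟨Ψ, μ·a⟩`. -/
def arAct (m : E →L[ℂ] E →L[ℂ] E) : Dl (Dl E) →L[ℂ] Dl E →L[ℂ] Dl E :=
  letI T1 : ((E →L[ℂ] Dl E) →L[ℂ] Dl E) →L[ℂ] (Dl E →L[ℂ] Dl E) :=
    (compL ℂ (Dl E) (E →L[ℂ] Dl E) (Dl E)).flip ((rAct m).flip)
  letI T2 : Dl (Dl E) →L[ℂ] ((E →L[ℂ] Dl E) →L[ℂ] Dl E) := compL ℂ E (Dl E) ℂ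
  T1.comp T2

/-- `brAct m Φ μ = μ · Φ`, i.e. `⟨μ·Φ, a⟩ = ⟨Φ, a·μ⟩`. -/
def brAct (m : E →L[ℂ] E →L[ℂ] E) : Dl (Dl E) →L[ℂ] Dl E →L[ℂ] Dl E :=
  letI T1 : ((E →L[ℂ] Dl E) →L[ℂ] Dl E) →L[ℂ] (Dl E →L[ℂ] Dl E) :=
    (compL ℂ (Dl E) (E →L[ℂ] Dl E) (Dl E)).flip ((lAct m).flip)
  letI T2 : Dl (Dl E) →L[ℂ] ((E →L[ℂ] Dl E) →L[ℂ] Dl E) := compL ℂ E (Dl E) ℂ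
  T1.comp T2

/-- The first Arens product on the bidual: `⟨Φ □ Ψ, μ⟩ = ⟨Φ, Ψ·μ⟩`. -/
def arensMul1 (m : E →L[ℂ] E →L[ℂ] E) : Dl (Dl E) →L[ℂ] Dl (Dl E) →L[ℂ] Dl (Dl E) :=
  ((compL ℂ (Dl E) (Dl E) ℂ).flip.comp (arAct m)).flip

/-- The second Arens product on the bidual: `⟨Φ ◇ Ψ, μ⟩ = ⟨Ψ, μ·Φ⟩`. -/
def arensMul2 (m : E →L[ℂ] E →L[ℂ] E) : Dl (Dl E) →L[ℂ] Dl (Dl E) →L[ℂ] Dl (Dl E) :=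
  (compL ℂ (Dl E) (Dl E) ℂ).flip.comp (brAct m)

/-- Sanity check: the above maps are given by their correct defining formulas. -/
theorem arens_apply (m : E →L[ℂ] E →L[ℂ] E) (Φ Ψ : Dl (Dl E)) (μ : Dl E) (a b : E) :
    rAct m a μ b = μ (m a b) ∧ lAct m a μ b = μ (m b a) ∧
    arAct m Ψ μ a = Ψ (rAct m a μ) ∧ brAct m Φ μ a = Φ (lAct m a μ) ∧
    arensMul1 m Φ Ψ μ = Φ (arAct m Ψ μ) ∧ arensMul2 m Φ Ψ μ = Ψ (brAct m Φ μ) :=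
  ⟨by simp [rAct], by simp [lAct], by simp [arAct], by simp [brAct],
    by simp [arensMul1, arAct], by simp [arensMul2, brAct]⟩

/-- The algebra `(E, m)` is Arens regular: its two Arens products coincide. -/
def ArensRegularWith (m : E →L[ℂ] E →L[ℂ] E) : Prop :=
  ∀ Φ Ψ : Dl (Dl E), arensMul1 m Φ Ψ = arensMul2 m Φ Ψ

/-- `μ` is a weakly almost periodic functional on the algebra `(E, m)`: the orbit map
`a ↦ a·μ` is a weakly compact operator `E → E'`, i.e. the image of the closed unit ball
is relatively compact for the weak topology of `E'`. -/
def IsWAP (m : E →L[ℂ] E →L[ℂ] E) (μ : Dl E) : Prop :=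
  IsCompact (closure ((toWeakSpace ℂ (Dl E)) '' ((fun a => lAct m a μ) '' closedBall (0 : E) 1)))

/-- `μ` is an almost periodic functional on the algebra `(E, m)`: the orbit map
`a ↦ a·μ` is a compact operator `E → E'`. -/
def IsAP (m : E →L[ℂ] E →L[ℂ] E) (μ : Dl E) : Prop :=
  IsCompact (closure ((fun a => lAct m a μ) '' closedBall (0 : E) 1))

end Arens

/-- A Banach algebra is Arens regular when its two Arens products coincide. -/
def ArensRegular (A : Type u) [NonUnitalNormedRing A] [NormedSpace ℂ A]
    [IsScalarTower ℂ A A] [SMulCommClass ℂ A A] : Prop :=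
  ArensRegularWith (ContinuousLinearMap.mul ℂ A)

/-- auxiliary -/
lemma finite_rank_decomp {E : Type u} [NormedAddCommGroup E] [NormedSpace ℂ E]
    (T : E →L[ℂ] E) (h : FiniteDimensional ℂ (LinearMap.range (T : E →ₗ[ℂ] E))) :
    ∃ (n : ℕ) (x : Fin n → E) (g : Fin n → Dl E),
      T = ∑ i, (g i).smulRight (x i) := by
  set p := LinearMap.range (T : E →ₗ[ℂ] E) with hp
  haveI := h
  let b := Module.finBasis ℂ p
  let Tc : E →L[ℂ] p := T.codRestrict p (fun z => LinearMap.mem_range_self _ z)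
  refine ⟨Module.finrank ℂ p, fun i => (b i : E),
    fun i => ((b.coord i).toContinuousLinearMap).comp Tc, ?_⟩
  ext z
  have hz := congrArg (p.subtype) (b.sum_repr (Tc z))
  simp only [map_sum, map_smul, Submodule.coe_subtype] at hz
  simpa [ContinuousLinearMap.sum_apply, Module.Basis.coord_apply, Tc] using hz.symm

lemma rank_one_fd {E : Type u} [NormedAddCommGroup E] [NormedSpace ℂ E] (g : Dl E) (x : E) :
    FiniteDimensional ℂ (LinearMap.range ((g.smulRight x : E →L[ℂ] E) : E →ₗ[ℂ] E)) := by
  have hle : LinearMap.range ((g.smulRight x : E →L[ℂ] E) : E →ₗ[ℂ] E) ≤ ℂ ∙ x := by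
    rintro _ ⟨z, rfl⟩
    exact Submodule.smul_mem _ _ (Submodule.mem_span_singleton_self x)
  exact Submodule.finiteDimensional_of_le hle

lemma lAct_mul_apply {A : Type v} [NonUnitalNormedRing A] [NormedSpace ℂ A]
    [IsScalarTower ℂ A A] [SMulCommClass ℂ A A] (a : A) (μ : Dl A) (b : A) :
    lAct (ContinuousLinearMap.mul ℂ A) a μ b = μ (b * a) := by simp [lAct]


/-- Let `E` be an infinite-dimensional Banach space and let
`𝒜 = 𝒜(E)` be the algebra of approximable operators on `E` (realised as a Banach
algebra `A` with an isometric algebra isomorphism `φ` onto the closure of the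
finite-rank operators in `B(E)`).  Then `AP(𝒜') = {0}`: the only functional
`U ∈ 𝒜(E)'` for which the map `T ↦ T·U` is compact is `U = 0`. -/
theorem ap_trivial_for_approximable_operators
    {E : Type u} [NormedAddCommGroup E] [NormedSpace ℂ E] [CompleteSpace E]
    (hE : ¬ FiniteDimensional ℂ E)
    {A : Type v}
    [NonUnitalNormedRing A] [NormedSpace ℂ A] [IsScalarTower ℂ A A] [SMulCommClass ℂ A A]
    [CompleteSpace A]
    (φ : A →ₗ[ℂ] (E →L[ℂ] E))
    (hiso : ∀ a : A, ‖φ a‖ = ‖a‖)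
    (hmul : ∀ a b : A, φ (a * b) = φ a * φ b)
    (hrange : Set.range φ =
      closure {T : E →L[ℂ] E | FiniteDimensional ℂ (LinearMap.range (T : E →ₗ[ℂ] E))}) :
    ∀ U : Dl A, IsAP (ContinuousLinearMap.mul ℂ A) U → U = 0 := by
  classical
  intro U hU
  by_contra hU0
  have hinj : Function.Injective φ := by
    intro a b hab
    have h1 : ‖φ (a - b)‖ = ‖a - b‖ := hiso _
    rw [map_sub, hab, sub_self, norm_zero] at h1
    exact sub_eq_zero.mp (norm_eq_zero.mp h1.symm)
  have hr1 : ∀ (x : E) (g : Dl E), ∃ a : A, φ a = g.smulRight x := by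
    intro x g
    have : g.smulRight x ∈ Set.range φ := by
      rw [hrange]
      exact subset_closure (rank_one_fd g x)
    exact this
  -- Step 1: find a rank-one preimage where U is nonzero
  obtain ⟨a, ha⟩ : ∃ a : A, U a ≠ 0 := by
    by_contra h
    push_neg at h
    exact hU0 (ContinuousLinearMap.ext fun a => by simp [h a])
  have hUa : (0:ℝ) < ‖U a‖ := norm_pos_iff.mpr ha
  have hden : (0:ℝ) < ‖U‖ + 1 := by positivity
  set ε : ℝ := ‖U a‖ / (‖U‖ + 1) with hεdef
  have hεpos : 0 < ε := div_pos hUa hden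
  have hmemcl : φ a ∈ closure
      {T : E →L[ℂ] E | FiniteDimensional ℂ (LinearMap.range (T : E →ₗ[ℂ] E))} := by
    rw [← hrange]; exact Set.mem_range_self a
  obtain ⟨T, hTS, hTd⟩ := Metric.mem_closure_iff.mp hmemcl ε hεpos
  obtain ⟨b, hbT⟩ : T ∈ Set.range φ := by rw [hrange]; exact subset_closure hTS
  have hab : ‖a - b‖ < ε := by
    rw [← hiso, map_sub, hbT]
    rw [dist_eq_norm] at hTd
    exact hTd
  have hUb : U b ≠ 0 := by
    intro h0
    have h2 : ‖U a‖ ≤ ‖U‖ * ‖a - b‖ := by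
      have := U.le_opNorm (a - b)
      rwa [map_sub, h0, sub_zero] at this
    have h3 : ‖U‖ * ‖a - b‖ ≤ ‖U‖ * ε := mul_le_mul_of_nonneg_left hab.le (norm_nonneg U)
    have h5 : ε * (‖U‖ + 1) = ‖U a‖ := div_mul_cancel₀ _ (ne_of_gt hden)
    nlinarith [hεpos]
  obtain ⟨n, xs, gs, hT⟩ := finite_rank_decomp T hTS
  choose ra hra using fun i => hr1 (xs i) (gs i)
  have hbsum : b = ∑ i, ra i := by
    apply hinj
    rw [map_sum, hbT, hT]
    exact Finset.sum_congr rfl fun i _ => (hra i).symm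
  obtain ⟨i0, hi0⟩ : ∃ i, U (ra i) ≠ 0 := by
    by_contra h
    push_neg at h
    apply hUb
    rw [hbsum, map_sum]
    exact Finset.sum_eq_zero fun i _ => h i
  set x₀ := xs i0 with hx₀def
  set g₀ := gs i0 with hg₀def
  set a₀ := ra i0 with ha₀def
  have hφa₀ : φ a₀ = g₀.smulRight x₀ := hra i0
  have hg0 : g₀ ≠ 0 := by
    intro h
    apply hi0
    have hz : φ a₀ = φ 0 := by rw [hφa₀, h, map_zero]; ext z; simp
    rw [show a₀ = 0 from hinj hz, map_zero]
  have hx0 : x₀ ≠ 0 := by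
    intro h
    apply hi0
    have hz : φ a₀ = φ 0 := by rw [hφa₀, h, map_zero]; ext z; simp
    rw [show a₀ = 0 from hinj hz, map_zero]
  have hx0pos : (0:ℝ) < ‖x₀‖ := norm_pos_iff.mpr hx0
  -- normalize g₀
  set c : ℂ := (‖g₀‖ : ℂ)⁻¹ with hcdef
  have hgn0 : ‖g₀‖ ≠ 0 := norm_ne_zero_iff.mpr hg0
  have hc0 : c ≠ 0 := by
    simp only [hcdef, ne_eq, inv_eq_zero, Complex.ofReal_eq_zero]
    exact hgn0
  set g₁ : Dl E := c • g₀ with hg₁def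
  set a₁ : A := c • a₀ with ha₁def
  have hφa₁ : φ a₁ = g₁.smulRight x₀ := by
    rw [ha₁def, map_smul, hφa₀, hg₁def]
    ext z
    simp [smul_smul]
  have hg₁norm : ‖g₁‖ = 1 := by
    rw [hg₁def, norm_smul, hcdef, norm_inv, Complex.norm_real, norm_norm,
      inv_mul_cancel₀ hgn0]
  have hUa₁ : U a₁ ≠ 0 := by
    rw [ha₁def, map_smul, smul_eq_mul]
    exact mul_ne_zero hc0 hi0
  have hUa₁pos : (0:ℝ) < ‖U a₁‖ := norm_pos_iff.mpr hUa₁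
  -- Riesz separated sequence
  obtain ⟨R, f, hR, hfle, hsep⟩ := exists_seq_norm_le_one_le_norm_sub (𝕜 := ℂ) (E := E) hE
  have hRpos : (0:ℝ) < R := by linarith
  have hRinvpos : (0:ℝ) < R⁻¹ := inv_pos.mpr hRpos
  set y : ℕ → E := fun n => ((R:ℂ))⁻¹ • f n with hydef
  have hRcnorm : ‖((R:ℂ))⁻¹‖ = R⁻¹ := by
    rw [norm_inv, Complex.norm_real, Real.norm_eq_abs, abs_of_pos hRpos]
  have hynorm : ∀ n, ‖y n‖ ≤ 1 := by
    intro n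
    rw [hydef]
    simp only
    rw [norm_smul, hRcnorm]
    calc R⁻¹ * ‖f n‖ ≤ R⁻¹ * R := mul_le_mul_of_nonneg_left (hfle n) hRinvpos.le
    _ = 1 := inv_mul_cancel₀ (ne_of_gt hRpos)
  have hysep : ∀ n m, n ≠ m → R⁻¹ ≤ ‖y n - y m‖ := by
    intro n m hnm
    have h1 : (1:ℝ) ≤ ‖f n - f m‖ := hsep hnm
    have : y n - y m = ((R:ℂ))⁻¹ • (f n - f m) := by rw [hydef]; simp [smul_sub]
    rw [this, norm_smul, hRcnorm]
    calc R⁻¹ = R⁻¹ * 1 := (mul_one _).symm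
    _ ≤ R⁻¹ * ‖f n - f m‖ := mul_le_mul_of_nonneg_left h1 hRinvpos.le
  choose aseq haseq using fun n => hr1 (y n) g₁
  have haseqball : ∀ n, aseq n ∈ closedBall (0:A) 1 := by
    intro n
    rw [mem_closedBall_zero_iff, ← hiso, haseq, ContinuousLinearMap.norm_smulRight_apply,
      hg₁norm, one_mul]
    exact hynorm n
  set P : ℕ → Dl A := fun n => lAct (ContinuousLinearMap.mul ℂ A) (aseq n) U with hP
  have hPmem : ∀ n, P n ∈ closure
      ((fun a => lAct (ContinuousLinearMap.mul ℂ A) a U) '' closedBall (0:A) 1) :=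
    fun n => subset_closure ⟨aseq n, haseqball n, rfl⟩
  set δ : ℝ := R⁻¹ * ‖U a₁‖ / ‖x₀‖ with hδdef
  have hδ : 0 < δ := div_pos (mul_pos hRinvpos hUa₁pos) hx0pos
  have hPsep : ∀ n m, n ≠ m → δ ≤ dist (P n) (P m) := by
    intro n m hnm
    have hyne : y n - y m ≠ 0 := by
      intro h
      have h2 := hysep n m hnm
      rw [h, norm_zero] at h2
      linarith
    obtain ⟨fd, hfd1, hfdx⟩ := exists_dual_vector ℂ (y n - y m) (norm_ne_zero_iff.mpr hyne)
    obtain ⟨b', hb'⟩ := hr1 x₀ fd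
    have hkey : b' * (aseq n - aseq m) = fd (y n - y m) • a₁ := by
      apply hinj
      rw [hmul, map_sub, haseq, haseq, hb', map_smul, hφa₁]
      ext z
      simp only [ContinuousLinearMap.mul_apply, ContinuousLinearMap.sub_apply,
        ContinuousLinearMap.smulRight_apply, ContinuousLinearMap.coe_smul',
        Pi.smul_apply, map_sub, map_smul, smul_eq_mul, ← sub_smul, ← mul_smul,
        ← smul_sub]
      rw [mul_comm]
    have heval : P n b' - P m b' = fd (y n - y m) * U a₁ := by
      simp only [hP]
      rw [lAct_mul_apply, lAct_mul_apply, ← map_sub, ← mul_sub, hkey, map_smul, smul_eq_mul]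
    have hnorm1 : ‖fd (y n - y m)‖ = ‖y n - y m‖ := by
      rw [hfdx]; simp
    have h6 : R⁻¹ * ‖U a₁‖ ≤ ‖P n b' - P m b'‖ := by
      rw [heval, norm_mul, hnorm1]
      exact mul_le_mul_of_nonneg_right (hysep n m hnm) (norm_nonneg _)
    have h7 : ‖P n b' - P m b'‖ ≤ ‖P n - P m‖ * ‖x₀‖ := by
      have hle := (P n - P m).le_opNorm b'
      rw [ContinuousLinearMap.sub_apply] at hle
      have hb'norm : ‖b'‖ = ‖x₀‖ := by
        rw [← hiso, hb', ContinuousLinearMap.norm_smulRight_apply, hfd1, one_mul]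
      rwa [hb'norm] at hle
    rw [dist_eq_norm, hδdef, div_le_iff₀ hx0pos]
    linarith
  -- contradiction with total boundedness
  have hTB := hU.totallyBounded
  obtain ⟨t, htfin, htc⟩ := Metric.totallyBounded_iff.mp hTB (δ/2) (by linarith)
  have hmem2 : ∀ n, ∃ z ∈ t, P n ∈ ball z (δ/2) := by
    intro n
    have := htc (hPmem n)
    simpa using this
  choose ctr hctr hball using hmem2
  haveI := htfin.to_subtype
  obtain ⟨n, m, hnm, hcc⟩ :=
    Finite.exists_ne_map_eq_of_infinite (fun n => (⟨ctr n, hctr n⟩ : t))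
  have hcc' : ctr n = ctr m := congrArg Subtype.val hcc
  have d1 := mem_ball.mp (hball n)
  have d2 := mem_ball.mp (hball m)
  have htri : dist (P n) (P m) ≤ dist (P n) (ctr n) + dist (ctr m) (P m) := by
    rw [hcc']
    exact dist_triangle _ _ _
  rw [dist_comm (ctr m) (P m)] at htri
  have := hPsep n m hnm
  linarith


end UPaper
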